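/- Let H = L²(π), P a bounded operator on H with PΠ = ΠP = Π and ‖P - Π‖ ≤ λ < 1 (Π the projection onto constants), and P̂ = λI + (1-λ)Π. Then for any bounded self-adjoint operators S₁, S₂ on H: ‖S₁ P S₂‖ ≤ ‖S₁ P̂ S₁‖^{1/2} ‖S₂ P̂ S₂‖^{1/2}. -/

import Mathlib

set_option maxHeartbeats 1000000 in
open MeasureTheory in
theorem stmt_8 {Ω : Type*} [MeasurableSpace Ω] (π : Measure Ω) [IsProbabilityMeasure π]
    (lam : ℝ) (hlam : lam < 1)
    (P Pi : Lp ℝ 2 π →L[ℝ] Lp ℝ 2 π)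
    (hPi : ∀ h : Lp ℝ 2 π, (Pi h : Ω → ℝ) =ᵐ[π] fun _ => ∫ y, h y ∂π)
    (hPPi : P.comp Pi = Pi) (hPiP : Pi.comp P = Pi)
    (hgap : ‖P - Pi‖ ≤ lam)
    (S₁ S₂ : Lp ℝ 2 π →L[ℝ] Lp ℝ 2 π)
    (hS₁ : IsSelfAdjoint S₁) (hS₂ : IsSelfAdjoint S₂) :
    ‖S₁.comp (P.comp S₂)‖ ≤
      Real.sqrt ‖S₁.comp ((lam • ContinuousLinearMap.id ℝ (Lp ℝ 2 π) +
          (1 - lam) • Pi).comp S₁)‖ *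
      Real.sqrt ‖S₂.comp ((lam • ContinuousLinearMap.id ℝ (Lp ℝ 2 π) +
          (1 - lam) • Pi).comp S₂)‖ := by
  open RealInnerProductSpace in
  · set Phat : Lp ℝ 2 π →L[ℝ] Lp ℝ 2 π :=
      lam • ContinuousLinearMap.id ℝ (Lp ℝ 2 π) + (1 - lam) • Pi with hPhat
    set I : Lp ℝ 2 π → ℝ := fun h => ∫ y, h y ∂π with hI
    have hlam0 : 0 ≤ lam := le_trans (norm_nonneg _) hgap
    have key1 : ∀ h h' : Lp ℝ 2 π, ⟪Pi h, h'⟫ = I h * I h' := by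
      intro h h'
      rw [L2.inner_def]
      have : (fun a => (inner ℝ ((Pi h : Ω →₂[π] ℝ) a) ((h' : Ω →₂[π] ℝ) a) : ℝ))
          =ᵐ[π] fun a => I h * (h' : Ω → ℝ) a := by
        filter_upwards [hPi h] with a ha
        simp [RCLike.inner_apply, ha, hI, mul_comm]
      rw [integral_congr_ae this, integral_const_mul]
    -- I (Pi h) = I h
    have key2 : ∀ h : Lp ℝ 2 π, I (Pi h) = I h := by
      intro h
      have := integral_congr_ae (hPi h)
      simpa [hI] using this
    -- quadratic form
    have quad : ∀ h : Lp ℝ 2 π, ⟪Phat h, h⟫ = I h ^ 2 + lam * ‖h - Pi h‖ ^ 2 := by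
      intro h
      have horth : ⟪Pi h, h - Pi h⟫ = 0 := by
        rw [key1]
        have : I (h - Pi h) = 0 := by
          have : I (h - Pi h) = I h - I (Pi h) := by
            simp only [hI]
            rw [integral_congr_ae (Lp.coeFn_sub h (Pi h))]
            exact integral_sub ((Lp.memLp h).integrable one_le_two)
                ((Lp.memLp (Pi h)).integrable one_le_two)
          rw [this, key2]; ring
        rw [this]; ring
      have hnorm : ‖h‖ ^ 2 = I h ^ 2 + ‖h - Pi h‖ ^ 2 := by
        have hd : h = Pi h + (h - Pi h) := by abel
        have hpn : ‖Pi h‖ ^ 2 = I h ^ 2 := by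
          have := key1 h (Pi h)
          rw [key2] at this
          rw [← real_inner_self_eq_norm_sq, this]; ring
        calc ‖h‖ ^ 2 = ‖Pi h + (h - Pi h)‖ ^ 2 := by rw [← hd]
          _ = ‖Pi h‖ ^ 2 + 2 * ⟪Pi h, h - Pi h⟫ + ‖h - Pi h‖ ^ 2 := by
              rw [← real_inner_self_eq_norm_sq, ← real_inner_self_eq_norm_sq,
                ← real_inner_self_eq_norm_sq, inner_add_add_self,
                real_inner_comm (h - Pi h) (Pi h)]; ring
          _ = I h ^ 2 + ‖h - Pi h‖ ^ 2 := by rw [horth, hpn]; ring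
      have : ⟪Phat h, h⟫ = lam * ‖h‖ ^ 2 + (1 - lam) * (I h * I h) := by
        simp only [hPhat, ContinuousLinearMap.add_apply, ContinuousLinearMap.smul_apply,
          ContinuousLinearMap.id_apply, inner_add_left, real_inner_smul_left,
          real_inner_self_eq_norm_sq, key1]
        try ring
      rw [this, hnorm]; ring
    -- linearity of I over subtraction
    have Isub : ∀ h h' : Lp ℝ 2 π, I (h - h') = I h - I h' := by
      intro h h'
      simp only [hI]
      rw [integral_congr_ae (Lp.coeFn_sub h h')]
      exact integral_sub ((Lp.memLp h).integrable one_le_two)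
        ((Lp.memLp h').integrable one_le_two)
    have Iu : ∀ h : Lp ℝ 2 π, I (h - Pi h) = 0 := by
      intro h; rw [Isub, key2]; ring
    have quadpos : ∀ h : Lp ℝ 2 π, 0 ≤ ⟪Phat h, h⟫ := by
      intro h; rw [quad]; positivity
    -- decomposition of the bilinear form
    have hdecomp : ∀ h₁ h₂ : Lp ℝ 2 π,
        ⟪P h₁, h₂⟫ = I h₁ * I h₂ + ⟪(P - Pi) (h₁ - Pi h₁), h₂ - Pi h₂⟫ := by
      intro h₁ h₂
      have hp1 : P (Pi h₁) = Pi h₁ := by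
        have := DFunLike.congr_fun hPPi h₁
        simpa using this
      have hp2 : Pi (P (h₁ - Pi h₁)) = Pi (h₁ - Pi h₁) := by
        have := DFunLike.congr_fun hPiP (h₁ - Pi h₁)
        simpa using this
      have e1 : P h₁ = Pi h₁ + ((P - Pi) (h₁ - Pi h₁) + Pi (h₁ - Pi h₁)) := by
        simp only [ContinuousLinearMap.sub_apply, map_sub, hp1]
        abel
      have iPu : I (P (h₁ - Pi h₁)) = 0 := by
        rw [← key2 (P (h₁ - Pi h₁)), hp2, key2, Iu]
      have e2 : h₂ = Pi h₂ + (h₂ - Pi h₂) := by abel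
      calc ⟪P h₁, h₂⟫
          = ⟪Pi h₁, h₂⟫ + (⟪(P - Pi) (h₁ - Pi h₁), h₂⟫ + ⟪Pi (h₁ - Pi h₁), h₂⟫) := by
            rw [← inner_add_left, ← inner_add_left, ← e1]
        _ = I h₁ * I h₂ + ⟪(P - Pi) (h₁ - Pi h₁), h₂⟫ := by
            rw [key1, key1, Iu]; ring
        _ = I h₁ * I h₂ +
            (⟪(P - Pi) (h₁ - Pi h₁), Pi h₂⟫ + ⟪(P - Pi) (h₁ - Pi h₁), h₂ - Pi h₂⟫) := by
            rw [← inner_add_right, ← e2]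
        _ = I h₁ * I h₂ + ⟪(P - Pi) (h₁ - Pi h₁), h₂ - Pi h₂⟫ := by
            have : ⟪(P - Pi) (h₁ - Pi h₁), Pi h₂⟫ = 0 := by
              rw [real_inner_comm, key1]
              have : I ((P - Pi) (h₁ - Pi h₁)) = 0 := by
                rw [ContinuousLinearMap.sub_apply, Isub, iPu, key2, Iu]; ring
              rw [this]; ring
            rw [this]; ring
    -- numeric Cauchy-Schwarz in weighted ℝ²
    have num : ∀ a₁ b₁ a₂ b₂ : ℝ, 0 ≤ b₁ → 0 ≤ b₂ →
        |a₁ * a₂| + lam * b₁ * b₂ ≤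
          Real.sqrt (a₁ ^ 2 + lam * b₁ ^ 2) * Real.sqrt (a₂ ^ 2 + lam * b₂ ^ 2) := by
      intro a₁ b₁ a₂ b₂ hb₁ hb₂
      rw [← Real.sqrt_mul (by positivity)]
      have hsq : (|a₁ * a₂| + lam * b₁ * b₂) ^ 2 ≤
          (a₁ ^ 2 + lam * b₁ ^ 2) * (a₂ ^ 2 + lam * b₂ ^ 2) := by
        have h1 : |a₁ * a₂| = |a₁| * |a₂| := abs_mul a₁ a₂
        have h2 : |a₁| ^ 2 = a₁ ^ 2 := sq_abs a₁
        have h3 : |a₂| ^ 2 = a₂ ^ 2 := sq_abs a₂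
        rw [h1, ← h2, ← h3]
        nlinarith [mul_nonneg hlam0 (sq_nonneg (|a₁| * b₂ - |a₂| * b₁)),
          abs_nonneg a₁, abs_nonneg a₂, mul_nonneg hb₁ hb₂]
      calc |a₁ * a₂| + lam * b₁ * b₂
          = Real.sqrt ((|a₁ * a₂| + lam * b₁ * b₂) ^ 2) := by
            rw [Real.sqrt_sq (by positivity)]
        _ ≤ _ := Real.sqrt_le_sqrt hsq
    -- the bilinear bound (Lemma 4.1(ii))
    have bilin : ∀ h₁ h₂ : Lp ℝ 2 π,
        |⟪P h₁, h₂⟫| ≤ Real.sqrt ⟪Phat h₁, h₁⟫ * Real.sqrt ⟪Phat h₂, h₂⟫ := by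
      intro h₁ h₂
      rw [quad, quad]
      have hcs : |⟪(P - Pi) (h₁ - Pi h₁), h₂ - Pi h₂⟫| ≤
          lam * ‖h₁ - Pi h₁‖ * ‖h₂ - Pi h₂‖ := by
        calc |⟪(P - Pi) (h₁ - Pi h₁), h₂ - Pi h₂⟫|
            ≤ ‖(P - Pi) (h₁ - Pi h₁)‖ * ‖h₂ - Pi h₂‖ := abs_real_inner_le_norm _ _
          _ ≤ (‖P - Pi‖ * ‖h₁ - Pi h₁‖) * ‖h₂ - Pi h₂‖ := by
              gcongr
              exact ContinuousLinearMap.le_opNorm _ _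
          _ ≤ lam * ‖h₁ - Pi h₁‖ * ‖h₂ - Pi h₂‖ := by gcongr
      calc |⟪P h₁, h₂⟫|
          ≤ |I h₁ * I h₂| + |⟪(P - Pi) (h₁ - Pi h₁), h₂ - Pi h₂⟫| := by
            rw [hdecomp]; exact abs_add_le _ _
        _ ≤ |I h₁ * I h₂| + lam * ‖h₁ - Pi h₁‖ * ‖h₂ - Pi h₂‖ := by linarith
        _ ≤ _ := num _ _ _ _ (norm_nonneg _) (norm_nonneg _)
    -- quadratic form bound via operator norms
    have qbound : ∀ (S : Lp ℝ 2 π →L[ℝ] Lp ℝ 2 π), IsSelfAdjoint S → ∀ h : Lp ℝ 2 π,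
        Real.sqrt ⟪Phat (S h), S h⟫ ≤ Real.sqrt ‖S.comp (Phat.comp S)‖ * ‖h‖ := by
      intro S hS h
      have e : ⟪Phat (S h), S h⟫ = ⟪(S.comp (Phat.comp S)) h, h⟫ := by
        rw [ContinuousLinearMap.comp_apply, ContinuousLinearMap.comp_apply]
        exact (hS.isSymmetric (Phat (S h)) h).symm
      have hb : ⟪Phat (S h), S h⟫ ≤ ‖S.comp (Phat.comp S)‖ * ‖h‖ ^ 2 := by
        rw [e]
        calc ⟪(S.comp (Phat.comp S)) h, h⟫
            ≤ ‖(S.comp (Phat.comp S)) h‖ * ‖h‖ := real_inner_le_norm _ _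
          _ ≤ (‖S.comp (Phat.comp S)‖ * ‖h‖) * ‖h‖ := by
              gcongr; exact ContinuousLinearMap.le_opNorm _ _
          _ = ‖S.comp (Phat.comp S)‖ * ‖h‖ ^ 2 := by ring
      calc Real.sqrt ⟪Phat (S h), S h⟫
          ≤ Real.sqrt (‖S.comp (Phat.comp S)‖ * ‖h‖ ^ 2) := Real.sqrt_le_sqrt hb
        _ = Real.sqrt ‖S.comp (Phat.comp S)‖ * ‖h‖ := by
            rw [Real.sqrt_mul (norm_nonneg _), Real.sqrt_sq (norm_nonneg _)]
    -- main bound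
    set T := S₁.comp (P.comp S₂) with hT
    set A := ‖S₁.comp (Phat.comp S₁)‖ with hA
    set B := ‖S₂.comp (Phat.comp S₂)‖ with hB
    apply ContinuousLinearMap.opNorm_le_bound _ (by positivity)
    intro h
    have key : ∀ h' : Lp ℝ 2 π,
        |⟪T h, h'⟫| ≤ (Real.sqrt B * ‖h‖) * (Real.sqrt A * ‖h'‖) := by
      intro h'
      have e : ⟪T h, h'⟫ = ⟪P (S₂ h), S₁ h'⟫ := by
        rw [hT, ContinuousLinearMap.comp_apply, ContinuousLinearMap.comp_apply]
        exact hS₁.isSymmetric (P (S₂ h)) h'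
      rw [e]
      calc |⟪P (S₂ h), S₁ h'⟫|
          ≤ Real.sqrt ⟪Phat (S₂ h), S₂ h⟫ * Real.sqrt ⟪Phat (S₁ h'), S₁ h'⟫ :=
            bilin _ _
        _ ≤ (Real.sqrt B * ‖h‖) * (Real.sqrt A * ‖h'‖) := by
            apply mul_le_mul (qbound S₂ hS₂ h) (qbound S₁ hS₁ h')
              (Real.sqrt_nonneg _) (by positivity)
    have hTh := key (T h)
    have hsq : ‖T h‖ ^ 2 ≤ ((Real.sqrt A * Real.sqrt B) * ‖h‖) * ‖T h‖ := by
      have : ⟪T h, T h⟫ ≤ |⟪T h, T h⟫| := le_abs_self _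
      rw [← real_inner_self_eq_norm_sq]
      calc ⟪T h, T h⟫ ≤ |⟪T h, T h⟫| := le_abs_self _
        _ ≤ (Real.sqrt B * ‖h‖) * (Real.sqrt A * ‖T h‖) := hTh
        _ = ((Real.sqrt A * Real.sqrt B) * ‖h‖) * ‖T h‖ := by ring
    rcases eq_or_lt_of_le (norm_nonneg (T h)) with h0 | h0
    · rw [← h0]; positivity
    · nlinarith [hsq, h0]
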